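/- Let m ≥ 2 be a natural number and let t > 0 and P ∈ (0,1) be real numbers. Set Δ = 4·t²·P·(m−1)·(1−P) + t⁴ and W₂ = (2·(m−1)·P + t² + √Δ) / (2·(m−1+t²)). Then for every real W with 0 ≤ W ≤ 1, the inequality √(m−1)·(W − P) − t·√(W − W²) > 0 holds if and only if W > W₂. -/
import Mathlib

set_option maxHeartbeats 1000000 in
theorem cbw_rejection_iff_gt_root (m : ℕ) (hm : 2 ≤ m) (t P : ℝ) (ht : 0 < t)
    (hP0 : 0 < P) (hP1 : P < 1) :
    ∀ W : ℝ, 0 ≤ W → W ≤ 1 →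
      (Real.sqrt ((m : ℝ) - 1) * (W - P) - t * Real.sqrt (W - W ^ 2) > 0 ↔
        W > (2 * ((m : ℝ) - 1) * P + t ^ 2 +
              Real.sqrt (4 * t ^ 2 * P * ((m : ℝ) - 1) * (1 - P) + t ^ 4)) /
            (2 * ((m : ℝ) - 1 + t ^ 2))) := by
  intro W hW0 hW1
  have hm2 : (2:ℝ) ≤ (m:ℝ) := by exact_mod_cast hm
  set n : ℝ := (m:ℝ) - 1 with hn
  have hn1 : 1 ≤ n := by simp only [hn]; linarith
  have hnpos : 0 < n := by linarith
  have hP1' : 0 < 1 - P := by linarith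
  have hΔpos : 0 < 4 * t ^ 2 * P * n * (1 - P) + t ^ 4 := by positivity
  set s := Real.sqrt (4 * t ^ 2 * P * n * (1 - P) + t ^ 4) with hsdef
  have hs2 : s ^ 2 = 4 * t ^ 2 * P * n * (1 - P) + t ^ 4 := Real.sq_sqrt hΔpos.le
  have hspos : 0 < s := Real.sqrt_pos.mpr hΔpos
  have hWW : 0 ≤ W - W ^ 2 := by nlinarith
  have hsq : Real.sqrt (W - W ^ 2) ^ 2 = W - W ^ 2 := Real.sq_sqrt hWW
  have hsn : Real.sqrt n ^ 2 = n := Real.sq_sqrt hnpos.le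
  have hsnpos : 0 < Real.sqrt n := Real.sqrt_pos.mpr hnpos
  have hrt : 0 ≤ Real.sqrt (W - W ^ 2) := Real.sqrt_nonneg _
  have hden : 0 < 2 * (n + t ^ 2) := by positivity
  -- s is strictly bigger than t^2*(1-2P)
  have hsP : t ^ 2 * (1 - 2 * P) < s := by
    rcases le_or_gt (1 - 2 * P) 0 with h | h
    · nlinarith
    · have h2 : (t ^ 2 * (1 - 2 * P)) ^ 2 < s ^ 2 := by
        rw [hs2]
        nlinarith [mul_pos (mul_pos (mul_pos (mul_pos ht ht) hP0) hnpos) hP1',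
          mul_pos (mul_pos (mul_pos (mul_pos (mul_pos ht ht) ht) ht) hP0) hP1']
      nlinarith [mul_pos (mul_pos ht ht) h, hspos]
  have hsP' : t ^ 2 * (2 * P - 1) < s := by
    rcases le_or_gt (2 * P - 1) 0 with h | h
    · nlinarith
    · have h2 : (t ^ 2 * (2 * P - 1)) ^ 2 < s ^ 2 := by
        rw [hs2]
        nlinarith [mul_pos (mul_pos (mul_pos (mul_pos ht ht) hP0) hnpos) hP1',
          mul_pos (mul_pos (mul_pos (mul_pos (mul_pos ht ht) ht) ht) hP0) hP1']
      nlinarith [mul_pos (mul_pos ht ht) h, hspos]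
  constructor
  · intro h
    have hWP : P < W := by
      by_contra hle
      push_neg at hle
      nlinarith [mul_nonneg ht.le hrt, mul_nonneg hsnpos.le (sub_nonneg.mpr hle)]
    have hq : t ^ 2 * (W - W ^ 2) < n * (W - P) ^ 2 := by
      nlinarith [h, mul_nonneg ht.le hrt, hsn, hsq]
    rw [gt_iff_lt, div_lt_iff₀ hden]
    -- A := 2(n+t^2)W - (2nP + t^2); identity: A^2 - s^2 = 4(n+t^2) * q(W)
    have hA2 : s ^ 2 < (2 * (n + t ^ 2) * W - (2 * n * P + t ^ 2)) ^ 2 := by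
      nlinarith [mul_pos hden (show (0:ℝ) < n * (W - P) ^ 2 - t ^ 2 * (W - W ^ 2) by linarith)]
    have hApos : 0 < 2 * (n + t ^ 2) * W - (2 * n * P + t ^ 2) := by
      nlinarith [hsP, hspos, hA2, mul_pos hden (sub_pos.mpr hWP)]
    nlinarith [hA2, hApos, hspos]
  · intro h
    rw [gt_iff_lt, div_lt_iff₀ hden] at h
    have hApos : 0 < 2 * (n + t ^ 2) * W - (2 * n * P + t ^ 2) := by nlinarith
    have hWP : P < W := by nlinarith [hsP']
    have hA2 : s ^ 2 < (2 * (n + t ^ 2) * W - (2 * n * P + t ^ 2)) ^ 2 := by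
      nlinarith [hspos, hApos]
    have hq : t ^ 2 * (W - W ^ 2) < n * (W - P) ^ 2 := by
      nlinarith [hA2, hs2, hden]
    nlinarith [mul_pos hsnpos (sub_pos.mpr hWP), mul_nonneg ht.le hrt, hsn, hsq]
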